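/- Let k be an algebraically closed field, A a k-algebra, and M a simple A-module with dim_k M strictly less than the cardinality of k. Then every A-module endomorphism of M is multiplication by a scalar in k; consequently any central element of A acts on M by a scalar. -/

import Mathlib

universe u

open Polynomial in
/-- Dixmier's lemma: a division algebra over an algebraically closed field of rank less
than the cardinality of the field is trivial. -/
theorem dixmier_aux {k : Type u} [Field k] [IsAlgClosed k] {D : Type u} [DivisionRing D]
    [Algebra k D] (h : Module.rank k D < Cardinal.mk k) :
    Function.Surjective (algebraMap k D) := by
  have hint : ∀ x : D, IsIntegral k x := by
    intro x
    by_contra hx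
    have htr : Transcendental k x := fun halg => hx halg.isIntegral
    set C : Subring D := Subring.centralizer ({x} : Set D) with hC
    have hxC : x ∈ C := Subring.mem_centralizer_iff.2 fun g hg => by
      rw [Set.mem_singleton_iff] at hg; rw [hg]
    let E : Subfield D :=
      { Subring.centralizer (C : Set D) with
        inv_mem' := fun {y} hy => by
          have hy' : ∀ g ∈ (C : Set D), g * y = y * g := hy
          intro g hg
          exact Commute.inv_right₀ (hy' g hg) }
    have hmem : ∀ y : D, y ∈ E ↔ ∀ g ∈ C, g * y = y * g := fun y =>
      Subring.mem_centralizer_iff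
    have hxE : x ∈ E := (hmem x).2 fun g hg =>
      ((Subring.mem_centralizer_iff.1 hg) x (Set.mem_singleton x)).symm
    have hE_le : ∀ y : D, y ∈ E → y ∈ C := fun y hy =>
      Subring.mem_centralizer_iff.2 fun z hz => by
        rw [Set.mem_singleton_iff] at hz
        rw [hz]
        exact (hmem y).1 hy x hxC
    letI : Field ↥E :=
      { (inferInstance : DivisionRing ↥E) with
        mul_comm := fun a b =>
          Subtype.ext (((hmem a.1).1 a.2 b.1 (hE_le b.1 b.2)).symm) }
    have hkE : ∀ c : k, algebraMap k D c ∈ E := fun c =>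
      (hmem _).2 fun g _ => (Algebra.commutes c g).symm
    letI : Algebra k ↥E := RingHom.toAlgebra ((algebraMap k D).codRestrict E hkE)
    let incl : ↥E →ₐ[k] D :=
      { toRingHom := E.subtype, commutes' := fun c => rfl }
    have htr' : Transcendental k (⟨x, hxE⟩ : ↥E) := by
      intro halg
      obtain ⟨p, hp, hp0⟩ := halg
      refine htr ⟨p, hp, ?_⟩
      have : Polynomial.aeval (incl ⟨x, hxE⟩) p = incl (Polynomial.aeval (⟨x, hxE⟩ : ↥E) p) :=
        Polynomial.aeval_algHom_apply incl _ p
      rw [hp0, map_zero] at this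
      exact this
    have li := htr'.linearIndependent_sub_inv
    have li2 := li.map' incl.toLinearMap
      (LinearMap.ker_eq_bot.2 fun a b hab => Subtype.val_injective hab)
    have hle := li2.cardinal_le_rank
    exact absurd hle h.not_ge
  haveI : Algebra.IsIntegral k D := ⟨hint⟩
  exact IsAlgClosed.algebraMap_bijective_of_isIntegral.2

/-- Dixmier–Quillen Schur lemma: if `k` is algebraically closed, `A` a `k`-algebra, and `M`
a simple `A`-module with `dim_k M < |k|`, then every `A`-module endomorphism of `M` is
multiplication by a scalar in `k`; consequently any central element of `A` acts on `M` by
a scalar. -/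
theorem stmt18 (k : Type u) [Field k] [IsAlgClosed k] (A : Type*) [Ring A] [Algebra k A]
    (M : Type u) [AddCommGroup M] [Module k M] [Module A M] [IsScalarTower k A M]
    [IsSimpleModule A M] (hdim : Module.rank k M < Cardinal.mk k) :
    (∀ f : M →ₗ[A] M, ∃ c : k, ∀ m : M, f m = c • m) ∧
    (∀ z : A, (∀ a : A, z * a = a * z) → ∃ c : k, ∀ m : M, z • m = c • m) := by
  classical
  haveI := IsSimpleModule.nontrivial A M
  obtain ⟨m₀, hm₀⟩ := exists_ne (0 : M)
  letI : DivisionRing (Module.End A M) := Module.End.instDivisionRing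
  -- the evaluation map `End A M → M` at `m₀` is injective and `k`-linear
  let ev : Module.End A M →ₗ[k] M :=
    { toFun := fun f => f m₀
      map_add' := fun f g => rfl
      map_smul' := fun c f => rfl }
  have hev : Function.Injective ev := by
    intro f g hfg
    by_contra hne
    have h0 : f - g ≠ 0 := sub_ne_zero.2 hne
    have hinj := LinearMap.injective_of_ne_zero h0
    have : (f - g) m₀ = (f - g) 0 := by
      simp only [LinearMap.sub_apply, map_zero]
      have : f m₀ = g m₀ := hfg
      rw [this, sub_self]
    exact hm₀ (hinj this)
  have hrank : Module.rank k (Module.End A M) < Cardinal.mk k :=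
    lt_of_le_of_lt (ev.rank_le_of_injective hev) hdim
  have hsurj := dixmier_aux (k := k) (D := Module.End A M) hrank
  have main : ∀ f : M →ₗ[A] M, ∃ c : k, ∀ m : M, f m = c • m := by
    intro f
    obtain ⟨c, hc⟩ := hsurj f
    exact ⟨c, fun m => by rw [← hc]; rfl⟩
  refine ⟨main, fun z hz => ?_⟩
  let fz : M →ₗ[A] M :=
    { toFun := fun m => z • m
      map_add' := fun m n => smul_add z m n
      map_smul' := fun a m => by
        simp only [RingHom.id_apply, ← mul_smul, hz a] }
  obtain ⟨c, hc⟩ := main fz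
  exact ⟨c, fun m => hc m⟩
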